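/- Let H₁,…,H_m and K₁,…,K_m be subgroups of a group G with isomorphisms φᵢ : Hᵢ → Kᵢ, and let L = ⟨G, t₁,…,t_m : tᵢ h tᵢ⁻¹ = φᵢ(h) for all h ∈ Hᵢ⟩ be the iterated HNN extension. If w = g₀ t_{i₁}^{e₁} g₁ ⋯ t_{iₙ}^{eₙ} gₙ with gⱼ ∈ G, eⱼ ∈ {±1}, and w = 1 in L, then either (a) n = 0 and g₀ = 1 in G, or (b) there is 1 ≤ j < n with eⱼ = 1 = -e_{j+1}, iⱼ = i_{j+1}, and gⱼ ∈ H_{iⱼ}, or (c) there is 1 ≤ j < n with eⱼ = -1 = -e_{j+1}, iⱼ = i_{j+1}, and gⱼ ∈ K_{iⱼ}. -/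

import Mathlib

open Monoid

variable {G : Type*} [Group G]

/-- The defining relations `tᵢ h tᵢ⁻¹ = φᵢ(h)` of the iterated HNN extension, as elements of the
free product of `G` with the free group on the stable letters `t₁, …, t_m`. -/
def hnnRels (m : ℕ) (H K : Fin m → Subgroup G) (φ : ∀ i, H i ≃* K i) :
    Set (Coprod G (FreeGroup (Fin m))) :=
  {x | ∃ (i : Fin m) (h : H i),
    x = Coprod.inr (FreeGroup.of i) * Coprod.inl (h : G) * (Coprod.inr (FreeGroup.of i))⁻¹ *
        (Coprod.inl ((φ i h : G)))⁻¹}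

/-- The iterated HNN extension `L = ⟨G, t₁,…,t_m : tᵢ h tᵢ⁻¹ = φᵢ(h) for all h ∈ Hᵢ⟩`. -/
def IteratedHNN (m : ℕ) (H K : Fin m → Subgroup G) (φ : ∀ i, H i ≃* K i) : Type _ :=
  Coprod G (FreeGroup (Fin m)) ⧸ Subgroup.normalClosure (hnnRels m H K φ)

instance (m : ℕ) (H K : Fin m → Subgroup G) (φ : ∀ i, H i ≃* K i) :
    Group (IteratedHNN m H K φ) := by
  unfold IteratedHNN; infer_instance

/-- The canonical map `G → L`. -/
def hnnBase (m : ℕ) (H K : Fin m → Subgroup G) (φ : ∀ i, H i ≃* K i) :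
    G →* IteratedHNN m H K φ :=
  (QuotientGroup.mk' (Subgroup.normalClosure (hnnRels m H K φ))).comp Coprod.inl

/-- The stable letters `tᵢ ∈ L`. -/
def hnnStable (m : ℕ) (H K : Fin m → Subgroup G) (φ : ∀ i, H i ≃* K i) (i : Fin m) :
    IteratedHNN m H K φ :=
  QuotientGroup.mk' (Subgroup.normalClosure (hnnRels m H K φ))
    (Coprod.inr (FreeGroup.of i))

open HNNExtension

universe u

structure GpEmb (G : Type u) [Group G] : Type (u + 1) where
  T : Type u
  [grp : Group T]
  emb : G →* T
  inj : Function.Injective emb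

attribute [instance] GpEmb.grp

noncomputable def psi (H' K' : ℕ → Subgroup G) (φ' : ∀ i, H' i ≃* K' i) (P : GpEmb G) (k : ℕ) :
    ((H' k).map P.emb ≃* (K' k).map P.emb) :=
  ((Subgroup.equivMapOfInjective (H' k) P.emb P.inj).symm.trans (φ' k)).trans
    (Subgroup.equivMapOfInjective (K' k) P.emb P.inj)

noncomputable def Tow (H' K' : ℕ → Subgroup G) (φ' : ∀ i, H' i ≃* K' i) : ℕ → GpEmb G
  | 0 => { T := G, emb := MonoidHom.id G, inj := fun _ _ h => h }
  | (k+1) =>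
    { T := HNNExtension (Tow H' K' φ' k).T ((H' k).map (Tow H' K' φ' k).emb)
        ((K' k).map (Tow H' K' φ' k).emb) (psi H' K' φ' (Tow H' K' φ' k) k)
      emb := HNNExtension.of.comp (Tow H' K' φ' k).emb
      inj := fun a b hab => (Tow H' K' φ' k).inj ((HNNExtension.of_injective (psi H' K' φ' (Tow H' K' φ' k) k)) hab) }

variable (H' K' : ℕ → Subgroup G) (φ' : ∀ i, H' i ≃* K' i)

noncomputable def stepMap (k : ℕ) : (Tow H' K' φ' k).T →* (Tow H' K' φ' (k+1)).T := HNNExtension.of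

noncomputable def tlet : (k : ℕ) → ℕ → (Tow H' K' φ' k).T
  | 0, _ => (1 : G)
  | (k+1), i => if i = k then HNNExtension.t else HNNExtension.of (tlet k i)

lemma emb_succ (k : ℕ) (g : G) :
    (Tow H' K' φ' (k+1)).emb g = stepMap H' K' φ' k ((Tow H' K' φ' k).emb g) := rfl

lemma tlet_succ_self (k : ℕ) : tlet H' K' φ' (k+1) k = HNNExtension.t := by
  simp [tlet]
  rfl

lemma tlet_succ_of (k i : ℕ) (h : i ≠ k) :
    tlet H' K' φ' (k+1) i = stepMap H' K' φ' k (tlet H' K' φ' k i) := by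
  simp only [tlet, stepMap, if_neg h]
  exact if_neg h

lemma psi_apply (k : ℕ) (h : G) (hh : h ∈ H' k)
    (mem : (Tow H' K' φ' k).emb h ∈ (H' k).map (Tow H' K' φ' k).emb) :
    ((psi H' K' φ' (Tow H' K' φ' k) k ⟨_, mem⟩ : ((K' k).map (Tow H' K' φ' k).emb)) : (Tow H' K' φ' k).T)
      = (Tow H' K' φ' k).emb (φ' k ⟨h, hh⟩ : G) := by
  have h1 : (Subgroup.equivMapOfInjective (H' k) (Tow H' K' φ' k).emb (Tow H' K' φ' k).inj).symm
      ⟨_, mem⟩ = ⟨h, hh⟩ := by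
    rw [MulEquiv.symm_apply_eq]
    ext
    simp [Subgroup.coe_equivMapOfInjective_apply]
  rw [psi, MulEquiv.trans_apply, MulEquiv.trans_apply, h1]
  simp [Subgroup.coe_equivMapOfInjective_apply]

lemma tlet_conj : ∀ (k i : ℕ), i < k → ∀ (h : G) (hh : h ∈ H' i),
    tlet H' K' φ' k i * (Tow H' K' φ' k).emb h * (tlet H' K' φ' k i)⁻¹
      = (Tow H' K' φ' k).emb (φ' i ⟨h, hh⟩ : G)
  | 0, i, hi => absurd hi (Nat.not_lt_zero i)
  | (k+1), i, hi => by
    intro h hh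
    rcases Nat.lt_succ_iff_lt_or_eq.1 hi with hik | rfl
    · rw [tlet_succ_of _ _ _ _ _ (Nat.ne_of_lt hik), emb_succ, emb_succ]
      have hc := congrArg (stepMap H' K' φ' k) (tlet_conj k i hik h hh)
      simpa [map_mul, map_inv] using hc
    · rw [tlet_succ_self, emb_succ, emb_succ]
      have mem : (Tow H' K' φ' i).emb h ∈ (H' i).map (Tow H' K' φ' i).emb := ⟨h, hh, rfl⟩
      have h2 := HNNExtension.equiv_eq_conj (φ := psi H' K' φ' (Tow H' K' φ' i) i) ⟨_, mem⟩
      rw [← psi_apply H' K' φ' i h hh mem]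
      simp only [stepMap]
      exact h2.symm

noncomputable def wprod : (k : ℕ) → G → List (ℕ × ℤˣ × G) → (Tow H' K' φ' k).T
  | k, g₀, [] => (Tow H' K' φ' k).emb g₀
  | k, g₀, (i, un, g) :: l =>
      (Tow H' K' φ' k).emb g₀ * (tlet H' K' φ' k i ^ (un : ℤ) * wprod k g l)

@[simp] lemma wprod_nil (k : ℕ) (g₀ : G) :
    wprod H' K' φ' k g₀ [] = (Tow H' K' φ' k).emb g₀ := rfl

@[simp] lemma wprod_cons (k : ℕ) (g₀ : G) (i : ℕ) (un : ℤˣ) (g : G) (l : List (ℕ × ℤˣ × G)) :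
    wprod H' K' φ' k g₀ ((i, un, g) :: l) =
      (Tow H' K' φ' k).emb g₀ * (tlet H' K' φ' k i ^ (un : ℤ) * wprod H' K' φ' k g l) := rfl

lemma wprod_lift (k : ℕ) : ∀ (l : List (ℕ × ℤˣ × G)) (g₀ : G), (∀ x ∈ l, x.1 ≠ k) →
    wprod H' K' φ' (k+1) g₀ l = stepMap H' K' φ' k (wprod H' K' φ' k g₀ l)
  | [], g₀, _ => rfl
  | (i, un, g) :: l, g₀, hl => by
    rw [wprod_cons, wprod_cons, wprod_lift k l g (fun x hx => hl x (List.mem_cons_of_mem _ hx)),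
      tlet_succ_of _ _ _ _ _ (hl _ (List.mem_cons_self)), emb_succ]
    simp [map_mul, map_zpow]

def blocks (k : ℕ) : List (ℕ × ℤˣ × G) → List (ℕ × ℤˣ × G) × List (ℤˣ × G × List (ℕ × ℤˣ × G))
  | [] => ([], [])
  | (i, un, g) :: l =>
    if i = k then ([], (un, g, (blocks k l).1) :: (blocks k l).2)
    else ((i, un, g) :: (blocks k l).1, (blocks k l).2)

lemma blocks_join (k : ℕ) : ∀ l : List (ℕ × ℤˣ × G),
    l = (blocks k l).1 ++ ((blocks k l).2.map (fun z => (k, z.1, z.2.1) :: z.2.2)).flatten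
  | [] => rfl
  | (i, un, g) :: l => by
    have ih := blocks_join k l
    rcases eq_or_ne i k with rfl | hik
    · simp only [blocks, if_pos rfl, List.map_cons, List.flatten, List.nil_append,
        List.cons_append]
      exact congrArg _ ih
    · simp only [blocks, if_neg hik, List.cons_append]
      exact congrArg _ ih

lemma blocks_mem (k : ℕ) : ∀ (l : List (ℕ × ℤˣ × G)),
    (∀ x ∈ (blocks k l).1, x ∈ l ∧ x.1 ≠ k) ∧
    (∀ z ∈ (blocks k l).2, ∀ x ∈ z.2.2, x ∈ l ∧ x.1 ≠ k)
  | [] => by simp [blocks]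
  | (i, un, g) :: l => by
    have ih := blocks_mem k l
    rcases eq_or_ne i k with rfl | hik
    · simp only [blocks, if_pos rfl]
      refine ⟨by simp, ?_⟩
      rintro z hz x hx
      rcases List.mem_cons.1 hz with rfl | hz
      · exact ⟨List.mem_cons_of_mem _ (ih.1 x hx).1, (ih.1 x hx).2⟩
      · exact ⟨List.mem_cons_of_mem _ (ih.2 z hz x hx).1, (ih.2 z hz x hx).2⟩
    · simp only [blocks, if_neg hik]
      constructor
      · rintro x hx
        rcases List.mem_cons.1 hx with rfl | hx
        · exact ⟨List.mem_cons_self, hik⟩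
        · exact ⟨List.mem_cons_of_mem _ (ih.1 x hx).1, (ih.1 x hx).2⟩
      · rintro z hz x hx
        exact ⟨List.mem_cons_of_mem _ (ih.2 z hz x hx).1, (ih.2 z hz x hx).2⟩

noncomputable def tk (k : ℕ) : (Tow H' K' φ' (k+1)).T := HNNExtension.t

lemma wprod_blocks (k : ℕ) : ∀ (l : List (ℕ × ℤˣ × G)) (g₀ : G),
    wprod H' K' φ' (k+1) g₀ l =
      stepMap H' K' φ' k (wprod H' K' φ' k g₀ (blocks k l).1) *
      (((blocks k l).2.map (fun z => (z.1, wprod H' K' φ' k z.2.1 z.2.2))).map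
        (fun x => tk H' K' φ' k ^ ((x.1 : ℤˣ) : ℤ) * stepMap H' K' φ' k x.2)).prod
  | [], g₀ => by simp [blocks, emb_succ]
  | (i, un, g) :: l, g₀ => by
    have ih := wprod_blocks k l g
    rcases eq_or_ne i k with rfl | hik
    · simp only [blocks, if_pos rfl, wprod_cons, wprod_nil, List.map_cons, List.prod_cons]
      rw [ih, tlet_succ_self, emb_succ]
      show _ = _ * ((tk H' K' φ' i ^ ((un : ℤˣ) : ℤ) * _) * _)
      rw [show (HNNExtension.t : (Tow H' K' φ' (i+1)).T) = tk H' K' φ' i from rfl]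
      simp only [mul_assoc, List.map_map]
      rfl
    · simp only [blocks, if_neg hik, List.map_cons, wprod_cons]
      rw [ih, tlet_succ_of _ _ _ _ _ hik, emb_succ]
      simp [map_mul, map_zpow, mul_assoc]

lemma stepMap_inj (k : ℕ) : Function.Injective (stepMap H' K' φ' k) :=
  fun a b hab => HNNExtension.of_injective (psi H' K' φ' (Tow H' K' φ' k) k) hab

lemma not_chain'_decomp {α : Type*} {R : α → α → Prop} :
    ∀ {l : List α}, ¬ l.IsChain R → ∃ l₁ a b l₂, l = l₁ ++ a :: b :: l₂ ∧ ¬ R a b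
  | [], h => absurd List.isChain_nil h
  | [a], h => absurd (List.isChain_singleton a) h
  | a :: b :: l, h => by
    by_cases hR : R a b
    · have hc : ¬ (b :: l).IsChain R := fun hc => h (List.isChain_cons_cons.2 ⟨hR, hc⟩)
      obtain ⟨l₁, x, y, l₂, heq, hxy⟩ := not_chain'_decomp hc
      exact ⟨a :: l₁, x, y, l₂, by simp [heq], hxy⟩
    · exact ⟨[], a, b, l, rfl, hR⟩

lemma units_ne (u v : ℤˣ) (h : u ≠ v) : v = -u := by
  rcases Int.units_eq_one_or u with rfl | rfl <;>
    rcases Int.units_eq_one_or v with rfl | rfl <;> simp_all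

def Pinch (H' K' : ℕ → Subgroup G) (l : List (ℕ × ℤˣ × G)) : Prop :=
  ∃ (i : ℕ) (u : ℤˣ) (a b : G), [(i, u, a), (i, -u, b)] <:+: l ∧
    a ∈ (if u = 1 then H' i else K' i)

lemma Pinch.of_infix {H' K' : ℕ → Subgroup G} {l₁ l₂ : List (ℕ × ℤˣ × G)}
    (h : Pinch H' K' l₁) (hinf : l₁ <:+: l₂) : Pinch H' K' l₂ := by
  obtain ⟨i, u, a, b, hi, hm⟩ := h
  exact ⟨i, u, a, b, hi.trans hinf, hm⟩

lemma key : ∀ (k : ℕ) (l : List (ℕ × ℤˣ × G)) (g₀ c : G), (∀ x ∈ l, x.1 < k) →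
    wprod H' K' φ' k g₀ l = (Tow H' K' φ' k).emb c →
    (l = [] ∧ g₀ = c) ∨ Pinch H' K' l
  | 0, l, g₀, c, hl, hp => by
    have hln : l = [] := by
      cases l with
      | nil => rfl
      | cons x l => exact absurd (hl x (List.mem_cons_self)) (by omega)
    subst hln
    exact Or.inl ⟨rfl, hp⟩
  | (k+1), l, g₀, c, hl, hp => by
    by_cases hex : ∃ x ∈ l, x.1 = k
    · have hjoin := blocks_join (G := G) k l
      have hmem := blocks_mem (G := G) k l
      have hpb := wprod_blocks H' K' φ' k l g₀
      by_cases hch : ((blocks k l).2.map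
          (fun z => (z.1, wprod H' K' φ' k z.2.1 z.2.2))).IsChain
            (fun a b => a.2 ∈ HNNExtension.toSubgroup ((H' k).map (Tow H' K' φ' k).emb)
              ((K' k).map (Tow H' K' φ' k).emb) a.1 → a.1 = b.1)
      · exfalso
        let w : HNNExtension.NormalWord.ReducedWord (Tow H' K' φ' k).T ((H' k).map (Tow H' K' φ' k).emb)
            ((K' k).map (Tow H' K' φ' k).emb) :=
          ⟨wprod H' K' φ' k g₀ (blocks k l).1,
            (blocks k l).2.map (fun z => (z.1, wprod H' K' φ' k z.2.1 z.2.2)), hch⟩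
        have hwp : w.prod (psi H' K' φ' (Tow H' K' φ' k) k) = wprod H' K' φ' (k+1) g₀ l := by
          rw [hpb]; rfl
        have hrange : w.prod (psi H' K' φ' (Tow H' K' φ' k) k) ∈
            (HNNExtension.of.range :
              Subgroup (HNNExtension (Tow H' K' φ' k).T ((H' k).map (Tow H' K' φ' k).emb)
                ((K' k).map (Tow H' K' φ' k).emb) (psi H' K' φ' (Tow H' K' φ' k) k))) := by
          refine ⟨(Tow H' K' φ' k).emb c, ?_⟩
          rw [hwp, hp]; rfl
        have hnil := HNNExtension.ReducedWord.toList_eq_nil_of_mem_of_range (psi H' K' φ' (Tow H' K' φ' k) k) w hrange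
        have hr2 : (blocks k l).2 = [] := by
          simpa [w] using hnil
        obtain ⟨x, hx, hxk⟩ := hex
        rw [hjoin, hr2] at hx
        simp at hx
        exact (hmem.1 x hx).2 hxk
      · rw [List.isChain_map] at hch
        obtain ⟨M1, x, y, M2, hdec, hxy⟩ := not_chain'_decomp hch
        push_neg at hxy
        obtain ⟨hmemx, hne⟩ := hxy
        have hy1 : y.1 = -x.1 := units_ne _ _ hne
        have hxmem : x ∈ (blocks k l).2 := by rw [hdec]; simp
        have hblk : ∀ a ∈ x.2.2, a.1 < k := fun a ha => by
          have h3 := hmem.2 x hxmem a ha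
          exact lt_of_le_of_ne (Nat.lt_succ_iff.1 (hl a h3.1)) h3.2
        have hinf : ((k, x.1, x.2.1) :: (x.2.2 ++ [(k, y.1, y.2.1)])) <:+: l := by
          refine ⟨(blocks k l).1 ++ (M1.map (fun z => (k, z.1, z.2.1) :: z.2.2)).flatten,
            y.2.2 ++ (M2.map (fun z => (k, z.1, z.2.1) :: z.2.2)).flatten, ?_⟩
          conv_rhs => rw [hjoin, hdec]
          simp [List.append_assoc]
        have hblkinf : x.2.2 <:+: ((k, x.1, x.2.1) :: (x.2.2 ++ [(k, y.1, y.2.1)])) :=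
          ⟨[(k, x.1, x.2.1)], [(k, y.1, y.2.1)], by simp⟩
        rcases Int.units_eq_one_or x.1 with hu | hu
        · rw [hu, HNNExtension.toSubgroup_one, Subgroup.mem_map] at hmemx
          obtain ⟨h, hhH, hemb⟩ := hmemx
          rcases key k x.2.2 x.2.1 h hblk hemb.symm with ⟨hnil, rfl⟩ | hpin
          · right
            refine ⟨k, 1, x.2.1, y.2.1, ?_, by simpa using hhH⟩
            rw [hnil, hu, hy1] at hinf
            simpa [hu] using hinf
          · exact Or.inr (hpin.of_infix (hblkinf.trans hinf))
        · rw [hu, HNNExtension.toSubgroup_neg_one, Subgroup.mem_map] at hmemx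
          obtain ⟨h, hhK, hemb⟩ := hmemx
          rcases key k x.2.2 x.2.1 h hblk hemb.symm with ⟨hnil, rfl⟩ | hpin
          · right
            refine ⟨k, -1, x.2.1, y.2.1, ?_, by simpa using hhK⟩
            rw [hnil, hu, hy1] at hinf
            simpa [hu] using hinf
          · exact Or.inr (hpin.of_infix (hblkinf.trans hinf))
    · push_neg at hex
      have h1 := wprod_lift H' K' φ' k l g₀ hex
      rw [h1, emb_succ] at hp
      have h2 := stepMap_inj H' K' φ' k hp
      exact key k l g₀ c
        (fun x hx => lt_of_le_of_ne (Nat.lt_succ_iff.1 (hl x hx)) (hex x hx)) h2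



section Theta
variable (m : ℕ) (H K : Fin m → Subgroup G) (φ : ∀ i, H i ≃* K i)

noncomputable def thetaF : Coprod G (FreeGroup (Fin m)) →* (Tow H' K' φ' m).T :=
  Coprod.lift (Tow H' K' φ' m).emb (FreeGroup.lift fun i : Fin m => tlet H' K' φ' m (i : ℕ))

lemma thetaF_ker
    (hH : ∀ (i : Fin m) (h : G), h ∈ H i → h ∈ H' (i : ℕ))
    (hφ : ∀ (i : Fin m) (h : G) (hh' : h ∈ H' (i : ℕ)) (hh : h ∈ H i),
      ((φ' (i : ℕ) ⟨h, hh'⟩ : G)) = (φ i ⟨h, hh⟩ : G)) :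
    Subgroup.normalClosure (hnnRels m H K φ) ≤ (thetaF H' K' φ' m).ker := by
  apply Subgroup.normalClosure_le_normal
  rintro x ⟨i, h, rfl⟩
  have hh' : (h : G) ∈ H' (i : ℕ) := hH i (h : G) h.2
  have hc := tlet_conj H' K' φ' m (i : ℕ) i.2 (h : G) hh'
  rw [SetLike.mem_coe, MonoidHom.mem_ker]
  simp only [map_mul, map_inv, thetaF]
  simp only [Coprod.lift_apply_inl, Coprod.lift_apply_inr, FreeGroup.lift_apply_of]
  rw [hc, hφ i (h : G) hh' h.2]
  simp

noncomputable def theta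
    (hH : ∀ (i : Fin m) (h : G), h ∈ H i → h ∈ H' (i : ℕ))
    (hφ : ∀ (i : Fin m) (h : G) (hh' : h ∈ H' (i : ℕ)) (hh : h ∈ H i),
      ((φ' (i : ℕ) ⟨h, hh'⟩ : G)) = (φ i ⟨h, hh⟩ : G)) :
    IteratedHNN m H K φ →* (Tow H' K' φ' m).T :=
  QuotientGroup.lift _ (thetaF H' K' φ' m) (thetaF_ker H' K' φ' m H K φ hH hφ)

lemma theta_base
    (hH : ∀ (i : Fin m) (h : G), h ∈ H i → h ∈ H' (i : ℕ))
    (hφ : ∀ (i : Fin m) (h : G) (hh' : h ∈ H' (i : ℕ)) (hh : h ∈ H i),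
      ((φ' (i : ℕ) ⟨h, hh'⟩ : G)) = (φ i ⟨h, hh⟩ : G)) (g : G) :
    theta H' K' φ' m H K φ hH hφ (hnnBase m H K φ g) = (Tow H' K' φ' m).emb g := by
  rfl

lemma theta_stable
    (hH : ∀ (i : Fin m) (h : G), h ∈ H i → h ∈ H' (i : ℕ))
    (hφ : ∀ (i : Fin m) (h : G) (hh' : h ∈ H' (i : ℕ)) (hh : h ∈ H i),
      ((φ' (i : ℕ) ⟨h, hh'⟩ : G)) = (φ i ⟨h, hh⟩ : G)) (i : Fin m) :
    theta H' K' φ' m H K φ hH hφ (hnnStable m H K φ i) = tlet H' K' φ' m (i : ℕ) := by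
  show thetaF H' K' φ' m (Coprod.inr (FreeGroup.of i)) = _
  simp [thetaF, Coprod.lift_apply_inr, FreeGroup.lift_apply_of]

end Theta

lemma wprod_eq (k : ℕ) : ∀ (l : List (ℕ × ℤˣ × G)) (g₀ : G),
    wprod H' K' φ' k g₀ l = (Tow H' K' φ' k).emb g₀ *
      (l.map (fun x => tlet H' K' φ' k x.1 ^ ((x.2.1 : ℤˣ) : ℤ) *
        (Tow H' K' φ' k).emb x.2.2)).prod
  | [], g₀ => by simp
  | (i, un, gg) :: l, g₀ => by
    rw [wprod_cons, wprod_eq k l gg]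
    simp [mul_assoc]

/-- Britton's lemma for iterated HNN extensions:
if `w = g₀ t_{i₁}^{e₁} g₁ ⋯ t_{iₙ}^{eₙ} gₙ = 1` in `L`, then either `n = 0` and `g₀ = 1` in `G`,
or some subword `t_{iⱼ}^{1} gⱼ t_{iⱼ}^{-1}` occurs with `gⱼ ∈ H_{iⱼ}`, or some subword
`t_{iⱼ}^{-1} gⱼ t_{iⱼ}^{1}` occurs with `gⱼ ∈ K_{iⱼ}`. -/
theorem britton_lemma_iterated_hnn (m : ℕ) (H K : Fin m → Subgroup G)
    (φ : ∀ i, H i ≃* K i) (n : ℕ) (g : Fin (n + 1) → G) (e : Fin n → ℤ)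
    (idx : Fin n → Fin m) (he : ∀ j, e j = 1 ∨ e j = -1)
    (hw : hnnBase m H K φ (g 0) *
        (List.ofFn (fun j : Fin n =>
          (hnnStable m H K φ (idx j)) ^ (e j) * hnnBase m H K φ (g j.succ))).prod = 1) :
    (n = 0 ∧ g 0 = 1) ∨
      (∃ (j : Fin n) (hj : (j : ℕ) + 1 < n),
        e j = 1 ∧ e ⟨(j : ℕ) + 1, hj⟩ = -1 ∧ idx j = idx ⟨(j : ℕ) + 1, hj⟩ ∧
          g j.succ ∈ H (idx j)) ∨
      (∃ (j : Fin n) (hj : (j : ℕ) + 1 < n),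
        e j = -1 ∧ e ⟨(j : ℕ) + 1, hj⟩ = 1 ∧ idx j = idx ⟨(j : ℕ) + 1, hj⟩ ∧
          g j.succ ∈ K (idx j)) := by
  classical
  rcases Nat.eq_zero_or_pos m with rfl | hm
  · cases n with
    | succ n' => exact (idx 0).elim0
    | zero =>
      left
      refine ⟨rfl, ?_⟩
      have hθ := congrArg (theta (fun _ => (⊥ : Subgroup G)) (fun _ => (⊥ : Subgroup G))
        (fun _ => MulEquiv.refl _) 0 H K φ (fun i => i.elim0) (fun i => i.elim0)) hw
      rw [map_one, map_mul, theta_base] at hθ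
      simp at hθ
      exact hθ
  · set p : ℕ → Fin m := fun i => if h : i < m then ⟨i, h⟩ else ⟨0, hm⟩ with hp
    have hpv : ∀ i : Fin m, p (i : ℕ) = i := fun i => by
      simp only [hp]; rw [dif_pos i.2]
    have hHm : ∀ (i : Fin m) (h : G), h ∈ H i → h ∈ H (p (i : ℕ)) := fun i h hh => by
      rw [hpv i]; exact hh
    have hφm : ∀ (i : Fin m) (h : G) (hh' : h ∈ H (p (i : ℕ))) (hh : h ∈ H i),
        ((φ (p (i : ℕ)) ⟨h, hh'⟩ : G)) = (φ i ⟨h, hh⟩ : G) := fun i h hh' hh => by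
      revert hh'
      rw [hpv i]
      intro hh'; rfl
    set Θ := theta (fun i => H (p i)) (fun i => K (p i)) (fun i => φ (p i)) m H K φ hHm hφm
      with hΘ
    have hθ := congrArg Θ hw
    rw [map_one, map_mul, hΘ, theta_base, MonoidHom.map_list_prod, List.map_ofFn] at hθ
    have hfn : ((theta (fun i => H (p i)) (fun i => K (p i)) (fun i => φ (p i)) m H K φ hHm hφm) ∘
        fun j => hnnStable m H K φ (idx j) ^ e j * hnnBase m H K φ (g j.succ))
        = fun j : Fin n => tlet (fun i => H (p i)) (fun i => K (p i)) (fun i => φ (p i)) m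
            ((idx j : ℕ)) ^ (e j) *
          (Tow (fun i => H (p i)) (fun i => K (p i)) (fun i => φ (p i)) m).emb (g j.succ) := by
      funext j
      simp [Function.comp, map_mul, map_zpow, theta_stable, theta_base]
    rw [hfn] at hθ
    set u : Fin n → ℤˣ := fun j => if e j = 1 then 1 else -1 with hu'
    have hu : ∀ j, ((u j : ℤˣ) : ℤ) = e j := fun j => by
      rcases he j with h | h <;> simp [hu', h]
    set l : List (ℕ × ℤˣ × G) := List.ofFn (fun j => ((idx j : ℕ), u j, g j.succ)) with hl
    have hwl : wprod (fun i => H (p i)) (fun i => K (p i)) (fun i => φ (p i)) m (g 0) l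
        = (Tow (fun i => H (p i)) (fun i => K (p i)) (fun i => φ (p i)) m).emb 1 := by
      rw [map_one, wprod_eq, hl, List.map_ofFn]
      have hfn2 : ((fun x : ℕ × ℤˣ × G =>
          tlet (fun i => H (p i)) (fun i => K (p i)) (fun i => φ (p i)) m x.1 ^
            ((x.2.1 : ℤˣ) : ℤ) *
          (Tow (fun i => H (p i)) (fun i => K (p i)) (fun i => φ (p i)) m).emb x.2.2) ∘
          fun j : Fin n => ((idx j : ℕ), u j, g j.succ))
          = fun j : Fin n => tlet (fun i => H (p i)) (fun i => K (p i)) (fun i => φ (p i)) m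
              ((idx j : ℕ)) ^ (e j) *
            (Tow (fun i => H (p i)) (fun i => K (p i)) (fun i => φ (p i)) m).emb (g j.succ) := by
        funext j
        simp [Function.comp, hu j]
      rw [hfn2]
      exact hθ
    have hlt : ∀ x ∈ l, x.1 < m := by
      rw [hl]; intro x hx
      rw [List.mem_ofFn] at hx
      obtain ⟨j, rfl⟩ := hx
      exact (idx j).2
    rcases key (fun i => H (p i)) (fun i => K (p i)) (fun i => φ (p i)) m l (g 0) 1 hlt hwl with
      ⟨hnil, hg⟩ | hpin
    · left
      have hn0 : n = 0 := by simpa [hl] using congrArg List.length hnil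
      exact ⟨hn0, hg⟩
    · obtain ⟨i, v, a, b, ⟨s, t2, hst⟩, hmemv⟩ := hpin
      have hln : l.length = n := by simp [hl]
      have hlen : s.length + 2 + t2.length = n := by
        have h4 := congrArg List.length hst
        simp [hln] at h4
        omega
      have hj1 : s.length + 1 < n := by omega
      have hj0n : s.length < n := by omega
      have hga : (s ++ [(i, v, a), (i, -v, b)] ++ t2)[s.length]? = some (i, v, a) := by
        simp only [List.append_assoc]
        rw [List.getElem?_append_right (le_refl _)]
        simp
      have hgb : (s ++ [(i, v, a), (i, -v, b)] ++ t2)[s.length + 1]? = some (i, -v, b) := by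
        simp only [List.append_assoc]
        rw [List.getElem?_append_right (by omega)]
        simp
      have hoa : (List.ofFn (fun j : Fin n => ((idx j : ℕ), u j, g j.succ)))[s.length]?
          = some ((idx ⟨s.length, hj0n⟩ : ℕ), u ⟨s.length, hj0n⟩,
              g (⟨s.length, hj0n⟩ : Fin n).succ) := by
        simp [List.getElem?_ofFn, List.ofFnNthVal, hj0n]
      have hob : (List.ofFn (fun j : Fin n => ((idx j : ℕ), u j, g j.succ)))[s.length + 1]?
          = some ((idx ⟨s.length + 1, hj1⟩ : ℕ), u ⟨s.length + 1, hj1⟩,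
              g (⟨s.length + 1, hj1⟩ : Fin n).succ) := by
        simp [List.getElem?_ofFn, List.ofFnNthVal, hj1]
      have e1 : ((idx ⟨s.length, hj0n⟩ : ℕ), u ⟨s.length, hj0n⟩,
          g (⟨s.length, hj0n⟩ : Fin n).succ) = (i, v, a) := by
        have h0 := congrArg (fun L => L[s.length]?) (hst.trans hl)
        rw [hga, hoa] at h0
        exact (Option.some.injEq _ _ ▸ h0).symm
      have e2 : ((idx ⟨s.length + 1, hj1⟩ : ℕ), u ⟨s.length + 1, hj1⟩,
          g (⟨s.length + 1, hj1⟩ : Fin n).succ) = (i, -v, b) := by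
        have h0 := congrArg (fun L => L[s.length + 1]?) (hst.trans hl)
        rw [hgb, hob] at h0
        exact (Option.some.injEq _ _ ▸ h0).symm
      have hidx1 : (idx ⟨s.length, hj0n⟩ : ℕ) = i := congrArg Prod.fst e1
      have hv1 : u ⟨s.length, hj0n⟩ = v := congrArg (fun x => x.2.1) e1
      have ha1 : g (⟨s.length, hj0n⟩ : Fin n).succ = a := congrArg (fun x => x.2.2) e1
      have hidx2 : (idx ⟨s.length + 1, hj1⟩ : ℕ) = i := congrArg Prod.fst e2
      have hv2 : u ⟨s.length + 1, hj1⟩ = -v := congrArg (fun x => x.2.1) e2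
      have hidxeq : idx ⟨s.length, hj0n⟩ = idx ⟨s.length + 1, hj1⟩ :=
        Fin.ext (by rw [hidx1, hidx2])
      have hpi : p i = idx ⟨s.length, hj0n⟩ := by rw [← hidx1, hpv]
      rcases Int.units_eq_one_or v with rfl | rfl
      · right; left
        refine ⟨⟨s.length, hj0n⟩, hj1, ?_, ?_, hidxeq, ?_⟩
        · rw [← hu ⟨s.length, hj0n⟩, hv1]; rfl
        · rw [← hu ⟨s.length + 1, hj1⟩, hv2]; rfl
        · rw [ha1, ← hpi]
          simpa using hmemv
      · right; right
        refine ⟨⟨s.length, hj0n⟩, hj1, ?_, ?_, hidxeq, ?_⟩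
        · rw [← hu ⟨s.length, hj0n⟩, hv1]; rfl
        · rw [← hu ⟨s.length + 1, hj1⟩, hv2]; rfl
        · rw [ha1, ← hpi]
          simpa using hmemv
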